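/- For p ≥ 1 and q ≥ 1 odd, the binomial coefficient C(2^p·q + 2^p - 2^i, 2^(p+1) - 2^(i+1) - 4) is odd for i ∈ {0, 1, 2} (when the lower index is nonnegative) and even for 3 ≤ i ≤ p - 1. -/

import Mathlib

private lemma lucas_step (n k : ℕ) :
    n.choose k % 2 = ((n % 2).choose (k % 2) * (n / 2).choose (k / 2)) % 2 := by
  haveI : Fact (Nat.Prime 2) := ⟨Nat.prime_two⟩
  exact Choose.choose_modEq_choose_mod_mul_choose_div_nat

private lemma odd_choose (k : ℕ) :
    ∀ n : ℕ, (∀ j, k.testBit j = true → n.testBit j = true) → Odd (n.choose k) := by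
  induction k using Nat.strong_induction_on with
  | _ k ih =>
    intro n h
    rcases Nat.eq_zero_or_pos k with rfl | hk
    · simp
    rw [Nat.odd_iff, lucas_step]
    have h1 : (n % 2).choose (k % 2) = 1 := by
      rcases Nat.mod_two_eq_zero_or_one k with hk2 | hk2
      · simp [hk2]
      · have hb : n.testBit 0 = true := h 0 (by simp [hk2])
        simp only [Nat.testBit_zero, decide_eq_true_eq] at hb
        simp [hk2, hb]
    rw [h1, one_mul, ← Nat.odd_iff]
    exact ih (k / 2) (Nat.div_lt_self hk one_lt_two) (n / 2) fun j hj => by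
      have := h (j + 1) (by rwa [Nat.testBit_add_one])
      rwa [Nat.testBit_add_one] at this

private lemma even_choose (n k : ℕ) (hn : n % 8 = 0) (hk : k % 8 = 4) :
    Even (n.choose k) := by
  rw [Nat.even_iff, lucas_step]
  have h1 : n % 2 = 0 := by omega
  have h2 : k % 2 = 0 := by omega
  rw [h1, h2, Nat.choose_self, one_mul, lucas_step]
  have h3 : n / 2 % 2 = 0 := by omega
  have h4 : k / 2 % 2 = 0 := by omega
  rw [h3, h4, Nat.choose_self, one_mul, lucas_step]
  have h5 : n / 2 / 2 % 2 = 0 := by omega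
  have h6 : k / 2 / 2 % 2 = 1 := by omega
  rw [h5, h6]
  simp

private lemma testBit_pow_sub_pow {a b : ℕ} (h : b ≤ a) (j : ℕ) :
    (2 ^ a - 2 ^ b).testBit j = (decide (b ≤ j) && decide (j < a)) := by
  have e : 2 ^ b * 2 ^ (a - b) = 2 ^ a := by rw [← pow_add]; congr 1; omega
  have e2 : 2 ^ a - 2 ^ b = 2 ^ b * (2 ^ (a - b) - 1) := by
    have h1 : 1 ≤ 2 ^ (a - b) := Nat.one_le_two_pow
    have h2 : 1 ≤ 2 ^ b := Nat.one_le_two_pow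
    rw [Nat.mul_sub, e, mul_one]
  rw [e2, Nat.testBit_two_pow_mul, Nat.testBit_two_pow_sub_one]
  by_cases hb : b ≤ j
  · rw [show decide (j ≥ b) = true from decide_eq_true hb, Bool.true_and, Bool.true_and,
      decide_eq_decide]
    omega
  · simp [hb]

theorem stmt10 (p q i : ℕ) (hp : 1 ≤ p) (hq : Odd q) (hq1 : 1 ≤ q) (hi : i ≤ p - 1) :
    (i ≤ 2 → 2 ^ (i + 1) + 4 ≤ 2 ^ (p + 1) →
        Odd (Nat.choose (2 ^ p * q + 2 ^ p - 2 ^ i) (2 ^ (p + 1) - 2 ^ (i + 1) - 4))) ∧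
      (3 ≤ i →
        Even (Nat.choose (2 ^ p * q + 2 ^ p - 2 ^ i) (2 ^ (p + 1) - 2 ^ (i + 1) - 4))) := by
  constructor
  · intro hi2 hle
    apply odd_choose
    intro j hj
    obtain ⟨c, hc⟩ := hq
    have hps : (2:ℕ) ^ (p + 1) = 2 * 2 ^ p := by rw [pow_succ]; ring
    have hp0 : 1 ≤ 2 ^ p := Nat.one_le_two_pow
    have hnq : 2 ^ p * q = 2 ^ (p + 1) * c + 2 ^ p := by
      subst hc; rw [pow_succ]; ring
    interval_cases i
    · -- i = 0
      have h2p : (6:ℕ) ≤ 2 ^ (p + 1) := by norm_num at hle; omega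
      have hjp : j < p + 1 := by
        by_contra hcon
        have hh : 2 ^ (p + 1) ≤ 2 ^ j := Nat.pow_le_pow_right (by norm_num) (by omega)
        rw [Nat.testBit_lt_two_pow (by omega)] at hj
        exact Bool.false_ne_true hj
      have hn : 2 ^ p * q + 2 ^ p - 2 ^ 0 = 2 ^ (p + 1) * c + (2 ^ (p + 1) - 1) := by
        simp only [pow_zero]; omega
      rw [hn, Nat.testBit_two_pow_mul_add _ (by omega : 2 ^ (p + 1) - 1 < 2 ^ (p + 1))]
      simp [hjp, Nat.testBit_two_pow_sub_one]
    · -- i = 1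
      have h2p : (8:ℕ) ≤ 2 ^ (p + 1) := by norm_num at hle; omega
      have hp3 : 3 ≤ p + 1 := by
        have := (Nat.pow_le_pow_iff_right (a := 2) (by norm_num)).mp
          (show (2:ℕ) ^ 3 ≤ 2 ^ (p + 1) by norm_num; omega)
        omega
      have hK : 2 ^ (p + 1) - 2 ^ (1 + 1) - 4 = 2 ^ (p + 1) - 2 ^ 3 := by norm_num; omega
      rw [hK, testBit_pow_sub_pow hp3] at hj
      simp only [Bool.and_eq_true, decide_eq_true_eq] at hj
      have hn : 2 ^ p * q + 2 ^ p - 2 ^ 1 = 2 ^ (p + 1) * c + (2 ^ (p + 1) - 2 ^ 1) := by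
        simp only [pow_one]; omega
      rw [hn, Nat.testBit_two_pow_mul_add _ (by omega : 2 ^ (p + 1) - 2 ^ 1 < 2 ^ (p + 1)),
        if_pos hj.2, testBit_pow_sub_pow (by omega)]
      simp only [Bool.and_eq_true, decide_eq_true_eq]
      omega
    · -- i = 2
      have h2p : (12:ℕ) ≤ 2 ^ (p + 1) := by norm_num at hle; omega
      have hp4 : 4 ≤ p + 1 := by
        have := (Nat.pow_lt_pow_iff_right (a := 2) (by norm_num)).mp
          (show (2:ℕ) ^ 3 < 2 ^ (p + 1) by norm_num; omega)
        omega
      have hA : (2:ℕ) ^ (p + 1) = 2 ^ (p - 3) * 16 := by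
        rw [show p + 1 = (p - 3) + 4 by omega, pow_add]; norm_num
      have hA0 : 1 ≤ 2 ^ (p - 3) := Nat.one_le_two_pow
      have hK : 2 ^ (p + 1) - 2 ^ (2 + 1) - 4 = 2 ^ 4 * (2 ^ (p - 3) - 1) + 4 := by
        norm_num; omega
      rw [hK, Nat.testBit_two_pow_mul_add _ (by norm_num : (4:ℕ) < 2 ^ 4)] at hj
      have hn : 2 ^ p * q + 2 ^ p - 2 ^ 2 = 2 ^ (p + 1) * c + (2 ^ (p + 1) - 2 ^ 2) := by
        norm_num; omega
      rw [hn, Nat.testBit_two_pow_mul_add _ (by omega : 2 ^ (p + 1) - 2 ^ 2 < 2 ^ (p + 1))]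
      by_cases hj4 : j < 4
      · rw [if_pos hj4, show (4:ℕ) = 2 ^ 2 by norm_num, Nat.testBit_two_pow] at hj
        have hj2 : j = 2 := by simp at hj; omega
        subst hj2
        rw [if_pos (by omega), testBit_pow_sub_pow (by omega)]
        simp only [Bool.and_eq_true, decide_eq_true_eq]
        omega
      · rw [if_neg hj4, Nat.testBit_two_pow_sub_one] at hj
        have hjlt : j - 4 < p - 3 := by simpa using hj
        rw [if_pos (by omega), testBit_pow_sub_pow (by omega)]
        simp only [Bool.and_eq_true, decide_eq_true_eq]
        omega
  · intro hi3
    have hip : i + 1 ≤ p := by omega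
    have hB : (2:ℕ) ^ i = 2 ^ (i - 3) * 8 := by
      rw [show i = (i - 3) + 3 by omega, pow_add]; norm_num
    have hA : (2:ℕ) ^ p = 2 ^ (p - 3) * 8 := by
      rw [show p = (p - 3) + 3 by omega, pow_add]; norm_num
    have hB1 : (2:ℕ) ^ (i + 1) = 2 ^ (i - 3) * 16 := by
      rw [show i + 1 = (i - 3) + 4 by omega, pow_add]; norm_num
    have hA1 : (2:ℕ) ^ (p + 1) = 2 ^ (p - 3) * 16 := by
      rw [show p + 1 = (p - 3) + 4 by omega, pow_add]; norm_num
    have hBA : (2:ℕ) ^ (i - 3) < 2 ^ (p - 3) :=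
      Nat.pow_lt_pow_right (by norm_num) (by omega)
    have hB0 : 1 ≤ (2:ℕ) ^ (i - 3) := Nat.one_le_two_pow
    have hpq : 2 ^ p * q = 2 ^ (p - 3) * q * 8 := by rw [hA]; ring
    apply even_choose
    · omega
    · omega
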